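/- Let n ≥ 8. Then there exist two distinct standard composition tableaux of shape (3, n−3) both having descent set {2, 5}; hence F_{set^{−1}({2,5})} appears with multiplicity at least 2 in the fundamental expansion of S_{(3,n−3)}, and S_{(3,n−3)} is not F-multiplicity free. -/

import Mathlib

/-- `SCTChain α U`: the filling `U` of the diagram of the composition `α`
(cells `0`-indexed, rows numbered from the top) arises from a saturated chain
in the poset `L_C` of compositions, where at each cover step either a new
part `1` is prepended or the leftmost part of a given size is increased by
`1`, and the cell created at the step reaching a composition of size `s` is
filled with `s`. -/
inductive SCTChain : List ℕ → ((ℕ × ℕ) → ℕ) → Prop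
  | nil : SCTChain [] (fun _ => 0)
  | prepend {β : List ℕ} {U : (ℕ × ℕ) → ℕ} (h : SCTChain β U) :
      SCTChain (1 :: β)
        (fun c => if c = (0, 0) then β.sum + 1
          else if c.1 = 0 then 0 else U (c.1 - 1, c.2))
  | grow {β : List ℕ} {U : (ℕ × ℕ) → ℕ} (h : SCTChain β U) (i : ℕ)
      (hi : i < β.length) (hleft : ∀ j < i, β.getD j 0 ≠ β.getD i 0) :
      SCTChain (β.set i (β.getD i 0 + 1))
        (fun c => if c = (i, β.getD i 0) then β.sum + 1 else U c)

/-- `T` is a standard composition tableau of shape `α ⊨ n`: the filling of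
the diagram of `α` obtained from a saturated chain
`∅ = α^{n+1} ⋖ ⋯ ⋖ α^1 = α` in `L_C` by placing entry `i` in the cell in
which `α^i` differs from `α^{i+1}` (so the cell created at the step reaching
size `s` receives the entry `n + 1 - s`); entries are `0` off the diagram. -/
def IsSCT (α : List ℕ) (T : (ℕ × ℕ) → ℕ) : Prop :=
  ∃ U, SCTChain α U ∧ T = fun c => if U c = 0 then 0 else α.sum + 1 - U c

/-- The descent set of a standard composition tableau: those `i` such that
the entry `i+1` lies in a cell weakly to the right of the cell containing
`i`. -/
def desC (T : (ℕ × ℕ) → ℕ) : Set ℕ :=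
  {i | 0 < i ∧ ∃ p q : ℕ × ℕ, T p = i ∧ T q = i + 1 ∧ p.2 ≤ q.2}

/-- `set(α) = {α₁, α₁+α₂, …, α₁+⋯+α_{ℓ(α)-1}}`, the subset of `[n-1]`
associated to a composition `α ⊨ n`; `com(T) = β` iff `desC T = compToSet β`. -/
def compToSet (α : List ℕ) : Set ℕ :=
  {s | ∃ i, 0 < i ∧ i < α.length ∧ s = (α.take i).sum}

/-- The quasisymmetric Schur function `S_α` is F-multiplicity free iff all
standard composition tableaux of shape `α` have pairwise distinct descent
sets. -/
def FmfSCT (α : List ℕ) : Prop :=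
  ∀ T T', IsSCT α T → IsSCT α T' → desC T = desC T' → T = T'


/-- single-row filling -/
def Urow (m : ℕ) : (ℕ × ℕ) → ℕ := fun c => if c.1 = 0 ∧ c.2 + 1 ≤ m then c.2 + 1 else 0

lemma chain_congr {α α' : List ℕ} {U U' : (ℕ × ℕ) → ℕ} (h : SCTChain α U)
    (hα : α = α') (hU : ∀ c, U c = U' c) : SCTChain α' U' := by
  subst hα
  rwa [show U' = U from (funext hU).symm]

lemma row_chain (m : ℕ) : SCTChain [m + 1] (Urow (m + 1)) := by
  induction m with
  | zero =>
    refine chain_congr (SCTChain.prepend SCTChain.nil) rfl ?_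
    rintro ⟨a, b⟩
    simp only [Urow, Prod.mk.injEq, List.sum_nil]
    split_ifs <;> omega
  | succ m ih =>
    refine chain_congr (SCTChain.grow ih 0 (by simp)
      (fun j hj => absurd hj (Nat.not_lt_zero j))) (by simp) ?_
    rintro ⟨a, b⟩
    simp only [Urow, Prod.mk.injEq, List.getD, List.sum_cons, List.sum_nil,
      List.getElem?_cons_zero, Option.getD_some]
    split_ifs <;> omega

/-- first tableau filling (chain order) -/
def U1 (n : ℕ) : (ℕ × ℕ) → ℕ := fun c =>
  if c.1 = 0 ∧ c.2 = 0 then n - 4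
  else if c.1 = 0 ∧ c.2 = 1 then n - 1
  else if c.1 = 0 ∧ c.2 = 2 then n
  else if c.1 = 1 ∧ c.2 + 6 ≤ n then c.2 + 1
  else if c.1 = 1 ∧ c.2 + 5 = n then n - 3
  else if c.1 = 1 ∧ c.2 + 4 = n then n - 2
  else 0

/-- second tableau filling (chain order) -/
def U2 (n : ℕ) : (ℕ × ℕ) → ℕ := fun c =>
  if c.1 = 0 ∧ c.2 = 0 then n - 4
  else if c.1 = 0 ∧ c.2 = 1 then n - 3
  else if c.1 = 0 ∧ c.2 = 2 then n - 1
  else if c.1 = 1 ∧ c.2 + 6 ≤ n then c.2 + 1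
  else if c.1 = 1 ∧ c.2 + 5 = n then n - 2
  else if c.1 = 1 ∧ c.2 + 4 = n then n
  else 0

/-- first standard composition tableau -/
def T1 (n : ℕ) : (ℕ × ℕ) → ℕ := fun c =>
  if c.1 = 0 ∧ c.2 = 0 then 5
  else if c.1 = 0 ∧ c.2 = 1 then 2
  else if c.1 = 0 ∧ c.2 = 2 then 1
  else if c.1 = 1 ∧ c.2 + 6 ≤ n then n - c.2
  else if c.1 = 1 ∧ c.2 + 5 = n then 4
  else if c.1 = 1 ∧ c.2 + 4 = n then 3
  else 0

/-- second standard composition tableau -/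
def T2 (n : ℕ) : (ℕ × ℕ) → ℕ := fun c =>
  if c.1 = 0 ∧ c.2 = 0 then 5
  else if c.1 = 0 ∧ c.2 = 1 then 4
  else if c.1 = 0 ∧ c.2 = 2 then 2
  else if c.1 = 1 ∧ c.2 + 6 ≤ n then n - c.2
  else if c.1 = 1 ∧ c.2 + 5 = n then 3
  else if c.1 = 1 ∧ c.2 + 4 = n then 1
  else 0

lemma chain_U1 (n : ℕ) (hn : 8 ≤ n) : SCTChain [3, n - 3] (U1 n) := by
  have h0 : SCTChain [n - 5] (Urow (n - 5)) := by
    have := row_chain (n - 6)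
    have e : n - 6 + 1 = n - 5 := by omega
    rwa [e] at this
  have h1 := SCTChain.prepend h0
  have h2 := chain_congr (SCTChain.grow h1 1 (by simp)
      (by intro j hj; interval_cases j; simp [List.getD]; omega))
    (show List.set [1, n - 5] 1 (List.getD [1, n - 5] 1 0 + 1) = [1, n - 4] by
      simp [List.getD]; omega) (fun _ => rfl)
  have h3 := chain_congr (SCTChain.grow h2 1 (by simp)
      (by intro j hj; interval_cases j; simp [List.getD]; omega))
    (show List.set [1, n - 4] 1 (List.getD [1, n - 4] 1 0 + 1) = [1, n - 3] by
      simp [List.getD]; omega) (fun _ => rfl)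
  have h4 := chain_congr (SCTChain.grow h3 0 (by simp)
      (fun j hj => absurd hj (Nat.not_lt_zero j)))
    (show List.set [1, n - 3] 0 (List.getD [1, n - 3] 0 0 + 1) = [2, n - 3] by
      simp [List.getD]) (fun _ => rfl)
  have h5 := chain_congr (SCTChain.grow h4 0 (by simp)
      (fun j hj => absurd hj (Nat.not_lt_zero j)))
    (show List.set [2, n - 3] 0 (List.getD [2, n - 3] 0 0 + 1) = [3, n - 3] by
      simp [List.getD]) (fun _ => rfl)
  refine chain_congr h5 rfl ?_
  rintro ⟨a, b⟩
  simp only [U1, Urow, Prod.mk.injEq, List.getD, List.sum_cons, List.sum_nil,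
    List.getElem?_cons_zero, List.getElem?_cons_succ, List.getElem?_nil, Option.getD_some,
    Option.getD_none]
  split_ifs <;> omega

lemma chain_U2 (n : ℕ) (hn : 8 ≤ n) : SCTChain [3, n - 3] (U2 n) := by
  have h0 : SCTChain [n - 5] (Urow (n - 5)) := by
    have := row_chain (n - 6)
    have e : n - 6 + 1 = n - 5 := by omega
    rwa [e] at this
  have h1 := SCTChain.prepend h0
  have h2 := chain_congr (SCTChain.grow h1 0 (by simp)
      (fun j hj => absurd hj (Nat.not_lt_zero j)))
    (show List.set [1, n - 5] 0 (List.getD [1, n - 5] 0 0 + 1) = [2, n - 5] by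
      simp [List.getD]) (fun _ => rfl)
  have h3 := chain_congr (SCTChain.grow h2 1 (by simp)
      (by intro j hj; interval_cases j; simp [List.getD]; omega))
    (show List.set [2, n - 5] 1 (List.getD [2, n - 5] 1 0 + 1) = [2, n - 4] by
      simp [List.getD]; omega) (fun _ => rfl)
  have h4 := chain_congr (SCTChain.grow h3 0 (by simp)
      (fun j hj => absurd hj (Nat.not_lt_zero j)))
    (show List.set [2, n - 4] 0 (List.getD [2, n - 4] 0 0 + 1) = [3, n - 4] by
      simp [List.getD]) (fun _ => rfl)
  have h5 := chain_congr (SCTChain.grow h4 1 (by simp)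
      (by intro j hj; interval_cases j; simp [List.getD]; omega))
    (show List.set [3, n - 4] 1 (List.getD [3, n - 4] 1 0 + 1) = [3, n - 3] by
      simp [List.getD]; omega) (fun _ => rfl)
  refine chain_congr h5 rfl ?_
  rintro ⟨a, b⟩
  simp only [U2, Urow, Prod.mk.injEq, List.getD, List.sum_cons, List.sum_nil,
    List.getElem?_cons_zero, List.getElem?_cons_succ, List.getElem?_nil, Option.getD_some,
    Option.getD_none]
  split_ifs <;> omega

set_option maxHeartbeats 1600000 in
/-- For `n ≥ 8` there are two distinct standard composition tableaux of
shape `(3, n-3)` both having descent set `{2, 5}`; hence `F_{set⁻¹({2,5})}`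
appears with multiplicity in `S_{(3,n-3)}`, which is therefore not
F-multiplicity free. -/
theorem qs_three_row_multiplicity (n : ℕ) (hn : 8 ≤ n) :
    (∃ T T', IsSCT [3, n - 3] T ∧ IsSCT [3, n - 3] T' ∧ T ≠ T' ∧
      desC T = {2, 5} ∧ desC T' = {2, 5}) ∧ ¬ FmfSCT [3, n - 3] := by
  have sum3 : List.sum [3, n - 3] = n := by simp; omega
  have hT1 : IsSCT [3, n - 3] (T1 n) := by
    refine ⟨U1 n, chain_U1 n hn, ?_⟩
    funext c
    simp only [T1, U1, sum3]
    split_ifs <;> first | omega | exact absurd (by assumption) not_false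
  have hT2 : IsSCT [3, n - 3] (T2 n) := by
    refine ⟨U2 n, chain_U2 n hn, ?_⟩
    funext c
    simp only [T2, U2, sum3]
    split_ifs <;> first | omega | exact absurd (by assumption) not_false
  have hne : T1 n ≠ T2 n := by
    intro h
    have h01 := congrFun h (0, 1)
    simp [T1, T2] at h01
  have hd1 : desC (T1 n) = {2, 5} := by
    ext i
    simp only [desC, Set.mem_setOf_eq, Set.mem_insert_iff, Set.mem_singleton_iff]
    constructor
    · rintro ⟨hi, p, q, hp, hq, hle⟩
      simp only [T1] at hp hq
      split_ifs at hp hq <;> omega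
    · rintro (rfl | rfl)
      · refine ⟨by norm_num, (0, 1), (1, n - 4), ?_, ?_, by omega⟩
        · simp only [T1]; split_ifs <;> simp_all <;> omega
        · simp only [T1]; split_ifs <;> simp_all <;> omega
      · refine ⟨by norm_num, (0, 0), (1, n - 6), ?_, ?_, by omega⟩
        · simp only [T1]; split_ifs <;> simp_all <;> omega
        · simp only [T1]; split_ifs <;> simp_all <;> omega
  have hd2 : desC (T2 n) = {2, 5} := by
    ext i
    simp only [desC, Set.mem_setOf_eq, Set.mem_insert_iff, Set.mem_singleton_iff]
    constructor
    · rintro ⟨hi, p, q, hp, hq, hle⟩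
      simp only [T2] at hp hq
      split_ifs at hp hq <;> omega
    · rintro (rfl | rfl)
      · refine ⟨by norm_num, (0, 2), (1, n - 5), ?_, ?_, by omega⟩
        · simp only [T2]; split_ifs <;> simp_all <;> omega
        · simp only [T2]; split_ifs <;> simp_all <;> omega
      · refine ⟨by norm_num, (0, 0), (1, n - 6), ?_, ?_, by omega⟩
        · simp only [T2]; split_ifs <;> simp_all <;> omega
        · simp only [T2]; split_ifs <;> simp_all <;> omega
  refine ⟨⟨T1 n, T2 n, hT1, hT2, hne, hd1, hd2⟩, ?_⟩
  intro hF
  exact hne (hF (T1 n) (T2 n) hT1 hT2 (hd1.trans hd2.symm))
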